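/- Let L be a torsion-free abelian group, B : L → L → ℤ a ℤ-bilinear map, and δ, γ ∈ L with B(δ, γ) = 1. Let T : L → L be defined by T(η) = η + B(δ, η) • δ. Then {x ∈ L : n • x ∈ (T − id)(L) for some nonzero integer n} = (T − id)(L). -/
import Mathlib


/-- Let `L` be a torsion-free abelian group, `B : L → L → ℤ` a `ℤ`-bilinear map, and
`δ, γ ∈ L` with `B δ γ = 1`. Let `T : L → L` be defined by `T η = η + B δ η • δ`. Then
`{x ∈ L : n • x ∈ (T - id) L` for some nonzero integer `n} = (T - id) L`. -/
theorem statement4 {L : Type*} [AddCommGroup L]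
    (htf : ∀ (n : ℤ) (x : L), n ≠ 0 → n • x = 0 → x = 0)
    (B : L →ₗ[ℤ] L →ₗ[ℤ] ℤ) (δ γ : L) (hB : B δ γ = 1) :
    {x : L | ∃ n : ℤ, n ≠ 0 ∧
        n • x ∈ Set.range (fun η : L => (η + B δ η • δ) - η)} =
      Set.range (fun η : L => (η + B δ η • δ) - η) := by
  ext x
  simp only [Set.mem_setOf_eq, Set.mem_range, add_sub_cancel_left]
  constructor
  · rintro ⟨n, hn, η, hη⟩
    -- n • x = B δ η • δ
    have h1 : B (n • x) γ = B δ η := by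
      rw [← hη]; simp [hB]
    have h2 : n * B x γ = B δ η := by
      simpa using h1
    have h3 : n • x = n • ((B x γ) • δ) := by
      rw [← hη, smul_smul, ← h2]
    have h4 : x = (B x γ) • δ := by
      have := htf n (x - (B x γ) • δ) hn (by rw [smul_sub, h3, sub_self])
      linear_combination (norm := abel) this
    exact ⟨(B x γ) • γ, by simp [hB, ← h4]⟩
  · rintro ⟨η, hη⟩
    exact ⟨1, one_ne_zero, η, by simpa using hη⟩
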